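/- For all non-negative integers m and k, the number of leaves in a finite rooted tree whose width (maximal number of non-leaf nodes at any fixed depth) is at most k, whose outdegree is at most k, and which has at most m split nodes (nodes with more than one child) on each root-to-leaf branch, is at most ((m+1)·k)^k. -/

import Mathlib

/-- Finite rooted trees with finitely many ordered children. -/
inductive RTree : Type where
  | node : List RTree → RTree

/-- The number of leaves of a tree (a node with no children is a leaf). -/
def RTree.leaves : RTree → ℕ
  | .node cs => if cs.isEmpty then 1 else (cs.attach.map (fun t => t.1.leaves)).sum
decreasing_by
  have := List.sizeOf_lt_of_mem t.2
  simp only [RTree.node.sizeOf_spec]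
  omega

/-- Number of internal (non-leaf) nodes at a given depth (root has depth 0). -/
def RTree.internalAt : RTree → ℕ → ℕ
  | .node cs, 0 => if cs.isEmpty then 0 else 1
  | .node cs, d + 1 => (cs.attach.map (fun t => t.1.internalAt d)).sum
decreasing_by
  have := List.sizeOf_lt_of_mem t.2
  simp only [RTree.node.sizeOf_spec]
  omega

/-- Every node of the tree has at most `k` children. -/
inductive RTree.DegLe (k : ℕ) : RTree → Prop where
  | mk (cs : List RTree) : cs.length ≤ k → (∀ t ∈ cs, RTree.DegLe k t) →
      RTree.DegLe k (.node cs)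

/-- Every root-to-leaf branch contains at most `m` split nodes
(nodes with at least two children). -/
inductive RTree.SplitLe : ℕ → RTree → Prop where
  | nosplit (m : ℕ) (cs : List RTree) : cs.length ≤ 1 →
      (∀ t ∈ cs, RTree.SplitLe m t) → RTree.SplitLe m (.node cs)
  | split (m : ℕ) (cs : List RTree) : 2 ≤ cs.length →
      (∀ t ∈ cs, RTree.SplitLe m t) → RTree.SplitLe (m + 1) (.node cs)

def RTree.height : RTree → ℕ
  | .node cs => (cs.attach.map (fun t => t.1.height + 1)).foldr max 0
decreasing_by
  have := List.sizeOf_lt_of_mem t.2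
  simp only [RTree.node.sizeOf_spec]
  omega

lemma RTree.leaves_eq (cs : List RTree) (h : ¬ cs.isEmpty) :
    (RTree.node cs).leaves = (cs.map RTree.leaves).sum := by
  rw [RTree.leaves, if_neg h, List.attach_map_val]

lemma RTree.internalAt_zero (cs : List RTree) :
    (RTree.node cs).internalAt 0 = if cs.isEmpty then 0 else 1 := by
  rw [RTree.internalAt]

lemma RTree.internalAt_succ (cs : List RTree) (d : ℕ) :
    (RTree.node cs).internalAt (d+1) = (cs.map (fun c => c.internalAt d)).sum := by
  rw [RTree.internalAt]
  exact congrArg List.sum (List.attach_map_val (l := cs) (f := fun c : RTree => c.internalAt d))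

lemma RTree.height_eq (cs : List RTree) :
    (RTree.node cs).height = (cs.map (fun c => c.height + 1)).foldr max 0 := by
  rw [RTree.height]
  exact congrArg (List.foldr max 0) (List.attach_map_val (l := cs) (f := fun c : RTree => c.height + 1))

lemma foldr_max_lt {l : List ℕ} {d : ℕ} (h : d < l.foldr max 0) : ∃ a ∈ l, d < a := by
  induction l with
  | nil => simp at h
  | cons x xs ih =>
    simp only [List.foldr_cons] at h
    rcases lt_max_iff.mp h with h | h
    · exact ⟨x, by simp, h⟩
    · obtain ⟨a, ha, hda⟩ := ih h
      exact ⟨a, by simp [ha], hda⟩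

lemma le_foldr_max {l : List ℕ} {a : ℕ} (h : a ∈ l) : a ≤ l.foldr max 0 := by
  induction l with
  | nil => simp at h
  | cons x xs ih =>
    simp only [List.foldr_cons]
    rcases List.mem_cons.mp h with rfl | h
    · exact le_max_left _ _
    · exact le_trans (ih h) (le_max_right _ _)

lemma RTree.ind {P : RTree → Prop} (h : ∀ cs, (∀ c ∈ cs, P c) → P (.node cs)) (t : RTree) : P t := by
  suffices H : ∀ n t, sizeOf t ≤ n → P t from H _ t le_rfl
  intro n
  induction n with
  | zero => intro t ht; cases t with | node cs =>
      simp only [RTree.node.sizeOf_spec] at ht; omega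
  | succ n ih =>
      intro t ht; cases t with | node cs =>
      apply h; intro c hc
      apply ih
      have := List.sizeOf_lt_of_mem hc
      simp only [RTree.node.sizeOf_spec] at ht
      omega

lemma RTree.one_le_internalAt (t : RTree) : ∀ d, d < t.height → 1 ≤ t.internalAt d := by
  induction t using RTree.ind with
  | h cs ih =>
    intro d hd
    rw [RTree.height_eq] at hd
    match d with
    | 0 =>
      obtain ⟨a, ha, _⟩ := foldr_max_lt hd
      obtain ⟨c, hc, rfl⟩ := List.mem_map.mp ha
      have hne : ¬ cs.isEmpty := by
        rcases cs with _ | _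
        · simp at hc
        · simp
      rw [RTree.internalAt_zero, if_neg hne]
    | d + 1 =>
      obtain ⟨a, ha, hda⟩ := foldr_max_lt hd
      obtain ⟨c, hc, rfl⟩ := List.mem_map.mp ha
      have h1 : 1 ≤ c.internalAt d := ih c hc d (by omega)
      rw [RTree.internalAt_succ]
      calc 1 ≤ c.internalAt d := h1
        _ ≤ _ := List.single_le_sum (by simp) _ (List.mem_map.mpr ⟨c, hc, rfl⟩)

lemma RTree.internalAt_eq_zero (t : RTree) : ∀ d, t.height ≤ d → t.internalAt d = 0 := by
  induction t using RTree.ind with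
  | h cs ih =>
    intro d hd
    rw [RTree.height_eq] at hd
    match d with
    | 0 =>
      rw [RTree.internalAt_zero]
      cases cs with
      | nil => simp
      | cons c cs' =>
        exfalso
        have : c.height + 1 ≤ 0 := le_trans (le_foldr_max (by simp)) hd
        omega
    | d + 1 =>
      rw [RTree.internalAt_succ]
      apply List.sum_eq_zero
      intro x hx
      obtain ⟨c, hc, rfl⟩ := List.mem_map.mp hx
      apply ih c hc
      have : c.height + 1 ≤ d + 1 :=
        le_trans (le_foldr_max (List.mem_map.mpr ⟨c, hc, rfl⟩)) hd
      omega

lemma exists_max_mem (l : List RTree) (h : l ≠ []) :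
    ∃ a ∈ l, ∀ b ∈ l, RTree.height b ≤ RTree.height a := by
  induction l with
  | nil => simp at h
  | cons x xs ih =>
    cases xs with
    | nil => exact ⟨x, by simp, by simp⟩
    | cons y ys =>
      obtain ⟨a, ha, hmax⟩ := ih (by simp)
      by_cases hxa : x.height ≤ a.height
      · refine ⟨a, by simp [ha], ?_⟩
        intro b hb
        rcases List.mem_cons.mp hb with rfl | hb
        · exact hxa
        · exact hmax b hb
      · refine ⟨x, by simp, ?_⟩
        intro b hb
        rcases List.mem_cons.mp hb with rfl | hb
        · exact le_rfl
        · exact le_trans (hmax b hb) (by omega)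

lemma list_sum_le (l : List ℕ) (B : ℕ) (h : ∀ x ∈ l, x ≤ B) : l.sum ≤ l.length * B := by
  induction l with
  | nil => simp
  | cons x xs ih =>
    simp only [List.sum_cons, List.length_cons]
    have h1 := h x (by simp)
    have h2 := ih (fun c hc => h c (by simp [hc]))
    rw [Nat.succ_mul]
    omega

lemma RTree.main (k : ℕ) (t : RTree) : ∀ m w : ℕ, t.DegLe k → t.SplitLe m →
    (∀ d, t.internalAt d ≤ w) → t.leaves ≤ (1 + m * (k - 1)) ^ w := by
  induction t using RTree.ind with
  | h cs ih =>
    intro m w hdeg hsplit hwidth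
    cases hdeg with
    | mk _ hdlen hdall =>
    cases hsplit with
    | nosplit _ _ hlen hall =>
      match cs, hlen, hall, hdall, hdlen, ih, hwidth with
      | [], _, _, _, _, _, _ =>
        rw [RTree.leaves]
        simp only [List.isEmpty_nil, if_true]
        exact Nat.one_le_pow _ _ (by omega)
      | [c], _, hall, hdall, hdlen, ih, hwidth =>
        have hl : (RTree.node [c]).leaves = c.leaves := by
          rw [RTree.leaves_eq _ (by simp)]; simp
        rw [hl]
        apply ih c (by simp) m w (hdall c (by simp)) (hall c (by simp))
        intro d
        have := hwidth (d + 1)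
        rw [RTree.internalAt_succ] at this
        simpa using this
      | c1 :: c2 :: cs', hlen, _, _, _, _, _ => simp at hlen
    | split m' _ hlen hall =>
      have hk2 : 2 ≤ k := le_trans hlen hdlen
      have hne : ¬ cs.isEmpty := by
        cases cs <;> simp_all
      have hw1 : 1 ≤ w := by
        have := hwidth 0
        rw [RTree.internalAt_zero, if_neg hne] at this
        exact this
      obtain ⟨w', rfl⟩ : ∃ w', w = w' + 1 := ⟨w - 1, by omega⟩
      obtain ⟨c₀, hc₀, hmax⟩ := exists_max_mem cs (by cases cs <;> simp_all)
      obtain ⟨l₁, l₂, rfl⟩ := List.append_of_mem hc₀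
      -- decomposition of internalAt sums
      have hsum : ∀ d, (l₁.map (fun c => c.internalAt d)).sum + c₀.internalAt d
          + (l₂.map (fun c => c.internalAt d)).sum ≤ w' + 1 := by
        intro d
        have := hwidth (d + 1)
        rw [RTree.internalAt_succ] at this
        simp [List.sum_append] at this
        omega
      -- side children have width ≤ w'
      have hside : ∀ c, (c ∈ l₁ ∨ c ∈ l₂) → ∀ d, c.internalAt d ≤ w' := by
        intro c hc d
        rcases Nat.eq_zero_or_pos (c.internalAt d) with h0 | h1
        · omega
        · have hdh : d < c.height := by
            by_contra h
            have := c.internalAt_eq_zero d (by omega)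
            omega
          have hd0 : d < c₀.height := by
            have := hmax c (by rcases hc with hc | hc <;> simp [hc])
            omega
          have h2 : 1 ≤ c₀.internalAt d := c₀.one_le_internalAt d hd0
          have hmem : c.internalAt d ≤ (l₁.map (fun c => c.internalAt d)).sum
              + (l₂.map (fun c => c.internalAt d)).sum := by
            rcases hc with hc | hc
            · have := List.single_le_sum (l := l₁.map (fun c => c.internalAt d))
                (by simp) _ (List.mem_map.mpr ⟨c, hc, rfl⟩)
              omega
            · have := List.single_le_sum (l := l₂.map (fun c => c.internalAt d))
                (by simp) _ (List.mem_map.mpr ⟨c, hc, rfl⟩)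
              omega
          have := hsum d
          omega
      set B := 1 + m' * (k - 1) with hB
      have hmem' : ∀ c, (c ∈ l₁ ∨ c ∈ l₂ ∨ c = c₀) → c ∈ l₁ ++ c₀ :: l₂ := by
        intro c hc
        rcases hc with hc | hc | rfl
        · simp [hc]
        · simp [hc]
        · simp
      have hIHside : ∀ c, (c ∈ l₁ ∨ c ∈ l₂) → c.leaves ≤ B ^ w' := by
        intro c hc
        exact ih c (hmem' c (by tauto)) m' w'
          (hdall c (hmem' c (by tauto))) (hall c (hmem' c (by tauto))) (hside c hc)
      have hIHc₀ : c₀.leaves ≤ B ^ (w' + 1) := by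
        apply ih c₀ (hmem' c₀ (by tauto)) m' (w' + 1)
          (hdall c₀ (hmem' c₀ (by tauto))) (hall c₀ (hmem' c₀ (by tauto)))
        intro d
        have := hsum d
        omega
      have hl : (RTree.node (l₁ ++ c₀ :: l₂)).leaves = (l₁.map RTree.leaves).sum
          + c₀.leaves + (l₂.map RTree.leaves).sum := by
        rw [RTree.leaves_eq _ (by simp [List.isEmpty_iff])]
        simp [List.sum_append]
        omega
      rw [hl]
      have hlen' : l₁.length + l₂.length + 1 ≤ k := by
        have := hdlen
        simp [List.length_append] at this
        omega
      have hs1 : (l₁.map RTree.leaves).sum ≤ l₁.length * B ^ w' := by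
        have hh : ∀ x ∈ l₁.map RTree.leaves, x ≤ B ^ w' := ?_
        · simpa using list_sum_le (l₁.map RTree.leaves) (B ^ w') hh
        intro x hx
        obtain ⟨c, hc, rfl⟩ := List.mem_map.mp hx
        exact hIHside c (Or.inl hc)
      have hs2 : (l₂.map RTree.leaves).sum ≤ l₂.length * B ^ w' := by
        have hh : ∀ x ∈ l₂.map RTree.leaves, x ≤ B ^ w' := ?_
        · simpa using list_sum_le (l₂.map RTree.leaves) (B ^ w') hh
        intro x hx
        obtain ⟨c, hc, rfl⟩ := List.mem_map.mp hx
        exact hIHside c (Or.inr hc)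
      have hBle : B ≤ 1 + (m' + 1) * (k - 1) := by
        rw [hB]
        have : m' * (k - 1) ≤ (m' + 1) * (k - 1) := Nat.mul_le_mul_right _ (by omega)
        omega
      calc (l₁.map RTree.leaves).sum + c₀.leaves + (l₂.map RTree.leaves).sum
          ≤ l₁.length * B ^ w' + B ^ (w' + 1) + l₂.length * B ^ w' :=
            add_le_add (add_le_add hs1 hIHc₀) hs2
        _ = (l₁.length + l₂.length) * B ^ w' + B * B ^ w' := by rw [pow_succ]; ring
        _ ≤ (k - 1) * B ^ w' + B * B ^ w' :=
            Nat.add_le_add_right (Nat.mul_le_mul_right _ (by omega)) _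
        _ = ((k - 1) + B) * B ^ w' := by ring
        _ = (1 + (m' + 1) * (k - 1)) * B ^ w' := by rw [hB]; ring
        _ ≤ (1 + (m' + 1) * (k - 1)) * (1 + (m' + 1) * (k - 1)) ^ w' :=
            Nat.mul_le_mul_left _ (Nat.pow_le_pow_left hBle w')
        _ = (1 + (m' + 1) * (k - 1)) ^ (w' + 1) := by rw [pow_succ, mul_comm]

theorem stmt_0 (m k : ℕ) (t : RTree)
    (hwidth : ∀ d : ℕ, t.internalAt d ≤ k)
    (hdeg : t.DegLe k)
    (hsplit : t.SplitLe m) :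
    t.leaves ≤ ((m + 1) * k) ^ k := by
  match k, hwidth, hdeg with
  | 0, hwidth, hdeg =>
    cases t with
    | node cs =>
      have h0 := hwidth 0
      rw [RTree.internalAt_zero] at h0
      have hcs : cs.isEmpty := by
        by_contra h
        rw [if_neg h] at h0
        omega
      rw [RTree.leaves, if_pos hcs, pow_zero]
  | (k + 1), hwidth, hdeg =>
    have h := RTree.main (k + 1) t m (k + 1) hdeg hsplit hwidth
    refine le_trans h (Nat.pow_le_pow_left ?_ _)
    have : m * (k + 1 - 1) = m * k := rfl
    have h2 : (m + 1) * (k + 1) = m * k + m + k + 1 := by ring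
    omega
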